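/- Extension lemma: every irreducible discrete subcopula D*: J_M^(1) × ⋯ × J_M^(L) → I_M can be extended to an irreducible discrete copula D: I_M^L → I_M with D restricted to J_M^(1) × ⋯ × J_M^(L) equal to D*. -/

import Mathlib

open Finset

/-- The sign `(-1)^{#{ℓ : ε ℓ = false}}` appearing in `L`-fold first-order differences. -/
def boxSign {L : ℕ} (ε : Fin L → Bool) : ℝ :=
  (-1 : ℝ) ^ (Finset.univ.filter (fun ℓ => ε ℓ = false)).card

/-- `D` is a discrete copula on `I_M^L`: the lattice point `(i₁/M, …, i_L/M)` is encoded
by an index vector `i : Fin L → ℕ` with `i ℓ ≤ M`.  The conditions are: values in `[0,1]`,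
groundedness (D1), uniform margins (D2), and `L`-increasingness over unit lattice boxes (D3). -/
def IsDiscreteCopula (M L : ℕ) (D : (Fin L → ℕ) → ℝ) : Prop :=
  (∀ i : Fin L → ℕ, (∀ ℓ, i ℓ ≤ M) → D i ∈ Set.Icc (0 : ℝ) 1) ∧
  (∀ i : Fin L → ℕ, (∀ ℓ, i ℓ ≤ M) → (∃ ℓ, i ℓ = 0) → D i = 0) ∧
  (∀ ℓ : Fin L, ∀ k : ℕ, k ≤ M →
    D (fun l => if l = ℓ then k else M) = (k : ℝ) / M) ∧
  (∀ i : Fin L → ℕ, (∀ ℓ, 1 ≤ i ℓ ∧ i ℓ ≤ M) →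
    0 ≤ ∑ ε : Fin L → Bool,
        boxSign ε * D (fun ℓ => if ε ℓ then i ℓ else i ℓ - 1))

/-- An irreducible discrete copula: a discrete copula whose range on the lattice is exactly
`I_M = {0, 1/M, …, 1}`. -/
def IsIrreducibleDiscreteCopula (M L : ℕ) (D : (Fin L → ℕ) → ℝ) : Prop :=
  IsDiscreteCopula M L D ∧
  (∀ i : Fin L → ℕ, (∀ ℓ, i ℓ ≤ M) → ∃ k ≤ M, D i = (k : ℝ) / M) ∧
  (∀ k : ℕ, k ≤ M → ∃ i : Fin L → ℕ, (∀ ℓ, i ℓ ≤ M) ∧ D i = (k : ℝ) / M)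

/-- A discrete subcopula on the grid `∏ℓ Jℓ` (each `J ℓ ⊆ {0,…,M}` containing `0` and `M`,
encoding `J_M^(ℓ) ⊆ I_M` containing `0` and `1`): (S1) groundedness, (S2) uniform margins
on the grid, (S3) nonnegative `L`-fold differences over grid boxes. -/
def IsDiscreteSubcopula (M L : ℕ) (J : Fin L → Finset ℕ) (D : (Fin L → ℕ) → ℝ) : Prop :=
  (∀ i : Fin L → ℕ, (∀ ℓ, i ℓ ∈ J ℓ) → (∃ ℓ, i ℓ = 0) → D i = 0) ∧
  (∀ ℓ : Fin L, ∀ k ∈ J ℓ,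
    D (fun l => if l = ℓ then k else M) = (k : ℝ) / M) ∧
  (∀ i j : Fin L → ℕ, (∀ ℓ, i ℓ ∈ J ℓ) → (∀ ℓ, j ℓ ∈ J ℓ) → (∀ ℓ, i ℓ ≤ j ℓ) →
    0 ≤ ∑ ε : Fin L → Bool,
        boxSign ε * D (fun ℓ => if ε ℓ then j ℓ else i ℓ))



/-- predecessor of `k` in the grid `J`. -/
noncomputable def jprev (J : Finset ℕ) (k : ℕ) : ℕ :=
  WithBot.unbotD 0 ((J.filter (fun u => u < k)).max)

lemma jprev_eq_max' (J : Finset ℕ) (k : ℕ) (h : (J.filter (fun u => u < k)).Nonempty) :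
    jprev J k = (J.filter (fun u => u < k)).max' h := by
  have := Finset.coe_max' h
  rw [jprev, ← this]; rfl

lemma filt_ne (J : Finset ℕ) (k : ℕ) (h0 : 0 ∈ J) (hk : 0 < k) :
    (J.filter (fun u => u < k)).Nonempty := ⟨0, Finset.mem_filter.2 ⟨h0, hk⟩⟩

lemma jprev_mem (J : Finset ℕ) (k : ℕ) (h0 : 0 ∈ J) (hk : 0 < k) : jprev J k ∈ J := by
  rw [jprev_eq_max' J k (filt_ne J k h0 hk)]
  have := Finset.max'_mem _ (filt_ne J k h0 hk)
  exact (Finset.mem_filter.1 this).1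

lemma jprev_lt (J : Finset ℕ) (k : ℕ) (h0 : 0 ∈ J) (hk : 0 < k) : jprev J k < k := by
  rw [jprev_eq_max' J k (filt_ne J k h0 hk)]
  have := Finset.max'_mem _ (filt_ne J k h0 hk)
  exact (Finset.mem_filter.1 this).2

lemma le_jprev (J : Finset ℕ) (k t : ℕ) (ht : t ∈ J) (htk : t < k) : t ≤ jprev J k := by
  have hne : (J.filter (fun u => u < k)).Nonempty := ⟨t, Finset.mem_filter.2 ⟨ht, htk⟩⟩
  rw [jprev_eq_max' J k hne]
  exact Finset.le_max' _ t ((Finset.mem_filter (s := J) (p := fun u => u < k)).2 ⟨ht, htk⟩)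

/-- telescoping sum over a grid. -/
lemma telescope {G : Type*} [AddCommGroup G] (J : Finset ℕ) :
    ∀ (T : ℕ), 0 ∈ J → T ∈ J → (∀ k ∈ J, k ≤ T) → ∀ f : ℕ → G,
      ∑ k ∈ J.erase 0, (f k - f (jprev J k)) = f T - f 0 := by
  induction J using Finset.strongInduction with
  | _ J ih =>
    intro T h0 hT hle f
    rcases Nat.eq_zero_or_pos T with hT0 | hTpos
    · subst hT0
      have hJ : J = {0} := by
        apply Finset.eq_singleton_iff_unique_mem.2
        exact ⟨h0, fun x hx => Nat.le_zero.1 (hle x hx)⟩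
      rw [hJ]; simp
    · have hTe : T ∈ J.erase 0 := Finset.mem_erase.2 ⟨by omega, hT⟩
      set pT := jprev J T with hpT
      have hpTmem : pT ∈ J := jprev_mem J T h0 hTpos
      have hpTlt : pT < T := jprev_lt J T h0 hTpos
      have hsub : J.erase T ⊂ J := Finset.erase_ssubset hT
      have hkey : ∀ k ∈ (J.erase T).erase 0, jprev (J.erase T) k = jprev J k := by
        intro k hk
        have hkJ := Finset.mem_erase.1 hk
        have hkT := Finset.mem_erase.1 hkJ.2
        have hkltT : k < T := lt_of_le_of_ne (hle k hkT.2) hkT.1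
        unfold jprev
        congr 1
        congr 1
        ext t
        simp only [Finset.mem_filter, Finset.mem_erase]
        constructor
        · rintro ⟨⟨-, h⟩, h2⟩; exact ⟨h, h2⟩
        · rintro ⟨h, h2⟩; exact ⟨⟨by omega, h⟩, h2⟩
      have hIH := ih (J.erase T) hsub pT
        (Finset.mem_erase.2 ⟨by omega, h0⟩)
        (Finset.mem_erase.2 ⟨by omega, hpTmem⟩)
        (by
          intro k hk
          have hkT := Finset.mem_erase.1 hk
          have : k < T := lt_of_le_of_ne (hle k hkT.2) hkT.1
          exact le_jprev J T k hkT.2 this) f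
      have hrw : (J.erase T).erase 0 = (J.erase 0).erase T := by
        ext x; simp [Finset.mem_erase]; tauto
      have hins : J.erase 0 = insert T ((J.erase 0).erase T) :=
        (Finset.insert_erase hTe).symm
      rw [hins, Finset.sum_insert (Finset.notMem_erase _ _), ← hrw,
        Finset.sum_congr rfl (fun k hk => by rw [← hkey k hk]), hIH]
      abel


lemma boxSign_eq_prod {L : ℕ} (ε : Fin L → Bool) :
    boxSign ε = ∏ ℓ, (if ε ℓ then (1:ℝ) else -1) := by
  rw [Finset.prod_ite, Finset.prod_const, Finset.prod_const, one_pow, one_mul, boxSign]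
  congr 2
  ext ℓ; simp

lemma boxSign_true {L : ℕ} : boxSign (fun _ : Fin L => true) = 1 := by
  rw [boxSign_eq_prod]; simp

lemma prod_sub_expand {L : ℕ} (a b : Fin L → ℝ) :
    ∏ ℓ, (a ℓ - b ℓ) = ∑ ε : Fin L → Bool, boxSign ε * ∏ ℓ, (if ε ℓ then a ℓ else b ℓ) := by
  have h1 : ∏ ℓ, (a ℓ - b ℓ)
      = ∏ ℓ, ∑ e ∈ (Finset.univ : Finset Bool), (if e then a ℓ else - b ℓ) := by
    apply Finset.prod_congr rfl
    intro ℓ _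
    rw [Fintype.sum_bool]
    norm_num
    ring
  rw [h1, Finset.prod_univ_sum]
  rw [Fintype.piFinset_univ]
  apply Finset.sum_congr rfl
  intro ε _
  rw [boxSign_eq_prod, ← Finset.prod_mul_distrib]
  apply Finset.prod_congr rfl
  intro ℓ _
  cases h : ε ℓ <;> simp
lemma ind_funext {L : ℕ} (j g : Fin L → ℕ) :
    (if j = g then (1:ℝ) else 0) = ∏ ℓ, (if j ℓ = g ℓ then (1:ℝ) else 0) := by
  by_cases h : j = g
  · subst h; simp
  · rw [if_neg h]
    obtain ⟨ℓ, hℓ⟩ : ∃ ℓ, j ℓ ≠ g ℓ := by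
      by_contra hc
      push_neg at hc
      exact h (funext hc)
    exact (Finset.prod_eq_zero (Finset.mem_univ ℓ) (by rw [if_neg hℓ])).symm

lemma sumbox {L : ℕ} (J : Fin L → Finset ℕ) (F : (Fin L → ℕ) → ℝ)
    (S : Fin L → Finset ℕ) (hS : ∀ ℓ, S ℓ ⊆ (J ℓ).erase 0)
    (u v : Fin L → ℕ) (hu : ∀ ℓ, u ℓ ∈ J ℓ) (hv : ∀ ℓ, v ℓ ∈ J ℓ)
    (hprev : ∀ ℓ, ∀ k ∈ S ℓ, jprev (J ℓ) k ∈ J ℓ)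
    (hcoef : ∀ ℓ (i : ℕ),
      (∑ k ∈ S ℓ, ((if i = k then (1:ℝ) else 0) - (if i = jprev (J ℓ) k then 1 else 0)))
        = (if i = u ℓ then 1 else 0) - (if i = v ℓ then 1 else 0)) :
    ∑ b ∈ Fintype.piFinset S,
      ∑ ε : Fin L → Bool, boxSign ε * F (fun ℓ => if ε ℓ then b ℓ else jprev (J ℓ) (b ℓ))
    = ∑ ε : Fin L → Bool, boxSign ε * F (fun ℓ => if ε ℓ then u ℓ else v ℓ) := by
  classical
  set Grid := Fintype.piFinset J with hGrid
  -- step 1: expand F at corners through indicator sums over the grid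
  have hgridmem : ∀ b ∈ Fintype.piFinset S, ∀ ε : Fin L → Bool,
      (fun ℓ => if ε ℓ then b ℓ else jprev (J ℓ) (b ℓ)) ∈ Grid := by
    intro b hb ε
    rw [Fintype.mem_piFinset] at hb ⊢
    intro ℓ
    by_cases h : ε ℓ
    · simpa [h] using Finset.mem_of_mem_erase (hS ℓ (hb ℓ))
    · simpa [h] using hprev ℓ _ (hb ℓ)
  have step1 : ∑ b ∈ Fintype.piFinset S,
      ∑ ε : Fin L → Bool, boxSign ε * F (fun ℓ => if ε ℓ then b ℓ else jprev (J ℓ) (b ℓ))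
      = ∑ j ∈ Grid, (∑ b ∈ Fintype.piFinset S, ∑ ε : Fin L → Bool,
          boxSign ε * (if j = (fun ℓ => if ε ℓ then b ℓ else jprev (J ℓ) (b ℓ)) then (1:ℝ) else 0)) * F j := by
    rw [Finset.sum_congr rfl (fun b hb => Finset.sum_congr rfl (fun ε _ => by
      rw [show F (fun ℓ => if ε ℓ then b ℓ else jprev (J ℓ) (b ℓ))
          = ∑ j ∈ Grid, (if j = (fun ℓ => if ε ℓ then b ℓ else jprev (J ℓ) (b ℓ)) then F j else 0) by
        rw [Finset.sum_ite_eq' Grid _ F, if_pos (hgridmem b hb ε)], Finset.mul_sum]))]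
    rw [Finset.sum_congr rfl (fun b _ => Finset.sum_comm), Finset.sum_comm]
    apply Finset.sum_congr rfl
    intro j _
    rw [Finset.sum_mul]
    apply Finset.sum_congr rfl
    intro b _
    rw [Finset.sum_mul]
    apply Finset.sum_congr rfl
    intro ε _
    by_cases h : j = (fun ℓ => if ε ℓ then b ℓ else jprev (J ℓ) (b ℓ))
    · rw [if_pos h, if_pos h]; ring
    · rw [if_neg h, if_neg h]; ring
  -- step 2: compute the coefficient of F j
  have step2 : ∀ j : Fin L → ℕ,
      (∑ b ∈ Fintype.piFinset S, ∑ ε : Fin L → Bool,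
          boxSign ε * (if j = (fun ℓ => if ε ℓ then b ℓ else jprev (J ℓ) (b ℓ)) then (1:ℝ) else 0))
      = ∏ ℓ, ((if j ℓ = u ℓ then (1:ℝ) else 0) - (if j ℓ = v ℓ then 1 else 0)) := by
    intro j
    have hterm : ∀ b : Fin L → ℕ, ∀ ε : Fin L → Bool,
        boxSign ε * (if j = (fun ℓ => if ε ℓ then b ℓ else jprev (J ℓ) (b ℓ)) then (1:ℝ) else 0)
        = ∏ ℓ, ((if ε ℓ then (1:ℝ) else -1) *
            (if j ℓ = (if ε ℓ then b ℓ else jprev (J ℓ) (b ℓ)) then 1 else 0)) := by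
      intro b ε
      rw [boxSign_eq_prod, ind_funext, ← Finset.prod_mul_distrib]
    calc ∑ b ∈ Fintype.piFinset S, ∑ ε : Fin L → Bool,
          boxSign ε * (if j = (fun ℓ => if ε ℓ then b ℓ else jprev (J ℓ) (b ℓ)) then (1:ℝ) else 0)
        = ∑ b ∈ Fintype.piFinset S, ∑ ε ∈ Fintype.piFinset (fun _ : Fin L => (Finset.univ : Finset Bool)),
            ∏ ℓ, ((if ε ℓ then (1:ℝ) else -1) *
              (if j ℓ = (if ε ℓ then b ℓ else jprev (J ℓ) (b ℓ)) then 1 else 0)) := by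
          rw [Fintype.piFinset_univ]
          exact Finset.sum_congr rfl (fun b _ => Finset.sum_congr rfl (fun ε _ => hterm b ε))
      _ = ∑ b ∈ Fintype.piFinset S, ∏ ℓ, ∑ e ∈ (Finset.univ : Finset Bool),
            ((if e then (1:ℝ) else -1) *
              (if j ℓ = (if e then b ℓ else jprev (J ℓ) (b ℓ)) then 1 else 0)) := by
          exact Finset.sum_congr rfl (fun b _ => (Finset.prod_univ_sum
            (fun _ : Fin L => (Finset.univ : Finset Bool))
            (fun ℓ e => (if e then (1:ℝ) else -1) *
              (if j ℓ = (if e then b ℓ else jprev (J ℓ) (b ℓ)) then 1 else 0))).symm)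
      _ = ∑ b ∈ Fintype.piFinset S, ∏ ℓ,
            ((if j ℓ = b ℓ then (1:ℝ) else 0) - (if j ℓ = jprev (J ℓ) (b ℓ) then 1 else 0)) := by
          apply Finset.sum_congr rfl
          intro b _
          apply Finset.prod_congr rfl
          intro ℓ _
          rw [Fintype.sum_bool]
          norm_num
          by_cases h2 : j ℓ = jprev (J ℓ) (b ℓ) <;> simp [h2] <;> ring
      _ = ∏ ℓ, ∑ k ∈ S ℓ, ((if j ℓ = k then (1:ℝ) else 0) - (if j ℓ = jprev (J ℓ) k then 1 else 0)) := by
          rw [Finset.prod_univ_sum]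
      _ = ∏ ℓ, ((if j ℓ = u ℓ then (1:ℝ) else 0) - (if j ℓ = v ℓ then 1 else 0)) := by
          exact Finset.prod_congr rfl (fun ℓ _ => hcoef ℓ (j ℓ))
  -- step 3: recombine
  rw [step1, Finset.sum_congr rfl (fun j _ => by rw [step2 j])]
  have step3 : ∀ j ∈ Grid,
      (∏ ℓ, ((if j ℓ = u ℓ then (1:ℝ) else 0) - (if j ℓ = v ℓ then 1 else 0))) * F j
      = ∑ ε : Fin L → Bool, boxSign ε * (if j = (fun ℓ => if ε ℓ then u ℓ else v ℓ) then F j else 0) := by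
    intro j _
    rw [prod_sub_expand, Finset.sum_mul]
    apply Finset.sum_congr rfl
    intro ε _
    have : (∏ ℓ, if ε ℓ then (if j ℓ = u ℓ then (1:ℝ) else 0) else (if j ℓ = v ℓ then 1 else 0))
        = (if j = (fun ℓ => if ε ℓ then u ℓ else v ℓ) then (1:ℝ) else 0) := by
      rw [ind_funext]
      apply Finset.prod_congr rfl
      intro ℓ _
      by_cases h : ε ℓ <;> simp [h]
    rw [this]
    by_cases h : j = (fun ℓ => if ε ℓ then u ℓ else v ℓ)
    · rw [if_pos h, if_pos h]; ring
    · rw [if_neg h, if_neg h]; ring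
  rw [Finset.sum_congr rfl step3, Finset.sum_comm]
  apply Finset.sum_congr rfl
  intro ε _
  rw [← Finset.mul_sum, Finset.sum_ite_eq' Grid _ F, if_pos]
  rw [Fintype.mem_piFinset]
  intro ℓ
  by_cases h : ε ℓ
  · simpa [h] using hu ℓ
  · simpa [h] using hv ℓ

lemma ind_forall {L : ℕ} (Q : Fin L → Prop) [∀ ℓ, Decidable (Q ℓ)] :
    (if ∀ ℓ, Q ℓ then (1:ℝ) else 0) = ∏ ℓ, (if Q ℓ then (1:ℝ) else 0) := by
  by_cases h : ∀ ℓ, Q ℓ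
  · rw [if_pos h]
    exact (Finset.prod_eq_one (fun ℓ _ => if_pos (h ℓ))).symm
  · rw [if_neg h]
    push_neg at h
    obtain ⟨ℓ, hℓ⟩ := h
    exact (Finset.prod_eq_zero (Finset.mem_univ ℓ)
      (if_neg hℓ : (if Q ℓ then (1:ℝ) else 0) = 0)).symm

namespace SCExt
open Finset

noncomputable def mu {L : ℕ} (J : Fin L → Finset ℕ) (Dstar : (Fin L → ℕ) → ℝ)
    (b : Fin L → ℕ) : ℝ :=
  ∑ ε : Fin L → Bool, boxSign ε * Dstar (fun ℓ => if ε ℓ then b ℓ else jprev (J ℓ) (b ℓ))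

noncomputable def cc (M : ℕ) {L : ℕ} (J : Fin L → Finset ℕ) (Dstar : (Fin L → ℕ) → ℝ)
    (b : Fin L → ℕ) : ℕ :=
  ⌊(M : ℝ) * mu J Dstar b⌋₊

def Bx {L : ℕ} (J : Fin L → Finset ℕ) : Finset (Fin L → ℕ) :=
  Fintype.piFinset (fun ℓ => (J ℓ).erase 0)

noncomputable def enc (M : ℕ) {L : ℕ} (b : Fin L → ℕ) : ℕ :=
  ((Fintype.equivFin (Fin L → Fin (M+1)))
    (fun ℓ => ⟨min (b ℓ) M, Nat.lt_succ_of_le (min_le_right _ _)⟩)).val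

noncomputable def oo (M : ℕ) {L : ℕ} (J : Fin L → Finset ℕ) (Dstar : (Fin L → ℕ) → ℝ)
    (ℓ : Fin L) (b : Fin L → ℕ) : ℕ :=
  ∑ b' ∈ (Bx J).filter (fun b' => b' ℓ = b ℓ ∧ enc M b' < enc M b), cc M J Dstar b'

noncomputable def PP (M : ℕ) {L : ℕ} (J : Fin L → Finset ℕ) (Dstar : (Fin L → ℕ) → ℝ) :
    Finset ((_ : Fin L → ℕ) × ℕ) :=
  (Bx J).sigma (fun b => Finset.range (cc M J Dstar b))

noncomputable def xx (M : ℕ) {L : ℕ} (J : Fin L → Finset ℕ) (Dstar : (Fin L → ℕ) → ℝ)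
    (ℓ : Fin L) (p : (_ : Fin L → ℕ) × ℕ) : ℕ :=
  jprev (J ℓ) (p.1 ℓ) + 1 + oo M J Dstar ℓ p.1 + p.2

noncomputable def DD (M : ℕ) {L : ℕ} (J : Fin L → Finset ℕ) (Dstar : (Fin L → ℕ) → ℝ)
    (i : Fin L → ℕ) : ℝ :=
  (((PP M J Dstar).filter (fun p => ∀ ℓ, xx M J Dstar ℓ p ≤ i ℓ)).card : ℝ) / M

end SCExt

/-- extension lemma: every irreducible discrete subcopula on a grid
`∏ℓ J_M^(ℓ)` extends to an irreducible discrete copula on `I_M^L`. -/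
theorem subcopula_extension (M L : ℕ) (hM : 0 < M) (hL : 2 ≤ L)
    (J : Fin L → Finset ℕ)
    (hJ0 : ∀ ℓ, 0 ∈ J ℓ) (hJM : ∀ ℓ, M ∈ J ℓ) (hJle : ∀ ℓ, ∀ k ∈ J ℓ, k ≤ M)
    (Dstar : (Fin L → ℕ) → ℝ)
    (hsub : IsDiscreteSubcopula M L J Dstar)
    (hirr₁ : ∀ i : Fin L → ℕ, (∀ ℓ, i ℓ ∈ J ℓ) → ∃ k ≤ M, Dstar i = (k : ℝ) / M)
    (hirr₂ : ∀ k : ℕ, k ≤ M → ∃ i : Fin L → ℕ, (∀ ℓ, i ℓ ∈ J ℓ) ∧ Dstar i = (k : ℝ) / M) :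
    ∃ D : (Fin L → ℕ) → ℝ, IsIrreducibleDiscreteCopula M L D ∧
      ∀ i : Fin L → ℕ, (∀ ℓ, i ℓ ∈ J ℓ) → D i = Dstar i := by
  classical
  obtain ⟨hS1, hS2, hS3⟩ := hsub
  have hM0 : (M : ℝ) ≠ 0 := Nat.cast_ne_zero.2 (by omega)
  -- membership facts for boxes
  have hBxmem : ∀ b ∈ SCExt.Bx J, ∀ ℓ, b ℓ ∈ J ℓ ∧ 0 < b ℓ := by
    intro b hb ℓ
    have := (Fintype.mem_piFinset.1 hb) ℓ
    have h := Finset.mem_erase.1 this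
    exact ⟨h.2, by omega⟩
  have hprJ : ∀ (ℓ : Fin L) (k : ℕ), 0 < k → jprev (J ℓ) k ∈ J ℓ :=
    fun ℓ k hk => jprev_mem (J ℓ) k (hJ0 ℓ) hk
  have hprlt : ∀ (ℓ : Fin L) (k : ℕ), 0 < k → jprev (J ℓ) k < k :=
    fun ℓ k hk => jprev_lt (J ℓ) k (hJ0 ℓ) hk
  -- nonnegativity of box masses
  have hμ0 : ∀ b ∈ SCExt.Bx J, 0 ≤ SCExt.mu J Dstar b := by
    intro b hb
    have h := hS3 (fun ℓ => jprev (J ℓ) (b ℓ)) b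
      (fun ℓ => hprJ ℓ (b ℓ) (hBxmem b hb ℓ).2)
      (fun ℓ => (hBxmem b hb ℓ).1)
      (fun ℓ => le_of_lt (hprlt ℓ (b ℓ) (hBxmem b hb ℓ).2))
    simpa [SCExt.mu] using h
  -- integrality: the counts
  have hc : ∀ b ∈ SCExt.Bx J, (SCExt.cc M J Dstar b : ℝ) = (M : ℝ) * SCExt.mu J Dstar b := by
    intro b hb
    have hcorner : ∀ ε : Fin L → Bool,
        ∀ ℓ, (fun ℓ => if ε ℓ then b ℓ else jprev (J ℓ) (b ℓ)) ℓ ∈ J ℓ := by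
      intro ε ℓ
      by_cases h : ε ℓ
      · simpa [h] using (hBxmem b hb ℓ).1
      · simpa [h] using hprJ ℓ (b ℓ) (hBxmem b hb ℓ).2
    choose k hk1 hk2 using fun ε : Fin L → Bool => hirr₁ _ (hcorner ε)
    set z : ℤ := ∑ ε : Fin L → Bool,
      ((-1 : ℤ) ^ (Finset.univ.filter (fun ℓ => ε ℓ = false)).card) * (k ε : ℤ) with hzdef
    have hz : (z : ℝ) = (M : ℝ) * SCExt.mu J Dstar b := by
      rw [SCExt.mu, Finset.mul_sum, hzdef]
      push_cast
      apply Finset.sum_congr rfl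
      intro ε _
      rw [hk2 ε, boxSign]
      field_simp
    have hz0 : (0 : ℤ) ≤ z := by
      have h1 : (0:ℝ) ≤ (z : ℝ) := by
        rw [hz]
        exact mul_nonneg (Nat.cast_nonneg M) (hμ0 b hb)
      exact_mod_cast h1
    have hz' : ((z.toNat : ℕ) : ℝ) = (M : ℝ) * SCExt.mu J Dstar b := by
      rw [← hz]
      exact_mod_cast congrArg (Int.cast : ℤ → ℝ) (Int.toNat_of_nonneg hz0)
    rw [SCExt.cc, ← hz', Nat.floor_natCast]
  -- slab sums (identity B)
  have hslabR : ∀ (ℓ₀ : Fin L), ∀ s ∈ (J ℓ₀).erase 0,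
      ∑ b ∈ (SCExt.Bx J).filter (fun b => b ℓ₀ = s), (SCExt.cc M J Dstar b : ℝ)
        = (s : ℝ) - (jprev (J ℓ₀) s : ℝ) := by
    intro ℓ₀ s hs
    have hs' := Finset.mem_erase.1 hs
    have hsJ : s ∈ J ℓ₀ := hs'.2
    have hs0 : 0 < s := by
      rcases Nat.eq_zero_or_pos s with h | h
      · exact absurd h hs'.1
      · exact h
    set Sf : Fin L → Finset ℕ := fun ℓ => if ℓ = ℓ₀ then {s} else (J ℓ).erase 0 with hSf
    set u : Fin L → ℕ := fun ℓ => if ℓ = ℓ₀ then s else M with hudef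
    set v : Fin L → ℕ := fun ℓ => if ℓ = ℓ₀ then jprev (J ℓ₀) s else 0 with hvdef
    have hSsub : ∀ ℓ, Sf ℓ ⊆ (J ℓ).erase 0 := by
      intro ℓ
      by_cases h : ℓ = ℓ₀
      · subst h
        simp only [hSf, if_pos rfl]
        exact Finset.singleton_subset_iff.2 hs
      · simp only [hSf, if_neg h]
        exact Finset.Subset.refl _
    have hfilter : (SCExt.Bx J).filter (fun b => b ℓ₀ = s) = Fintype.piFinset Sf := by
      ext b
      simp only [Finset.mem_filter, SCExt.Bx, Fintype.mem_piFinset, hSf]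
      constructor
      · rintro ⟨h1, h2⟩ ℓ
        by_cases h : ℓ = ℓ₀
        · rw [if_pos h, Finset.mem_singleton, h]
          exact h2
        · rw [if_neg h]
          exact h1 ℓ
      · intro h
        constructor
        · intro ℓ
          by_cases hh : ℓ = ℓ₀
          · have := h ℓ
            rw [if_pos hh, Finset.mem_singleton] at this
            rw [this, hh]
            exact Finset.mem_erase.2 ⟨by omega, hsJ⟩
          · have := h ℓ
            rwa [if_neg hh] at this
        · have := h ℓ₀
          rwa [if_pos rfl, Finset.mem_singleton] at this
    have hsubBx : Fintype.piFinset Sf ⊆ SCExt.Bx J := by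
      rw [← hfilter]
      exact Finset.filter_subset _ _
    have hmu : ∑ b ∈ Fintype.piFinset Sf, SCExt.mu J Dstar b
        = ∑ ε : Fin L → Bool, boxSign ε * Dstar (fun ℓ => if ε ℓ then u ℓ else v ℓ) := by
      apply sumbox J Dstar Sf hSsub u v
      · intro ℓ
        show (if ℓ = ℓ₀ then s else M) ∈ J ℓ
        by_cases h : ℓ = ℓ₀
        · rw [if_pos h, h]; exact hsJ
        · rw [if_neg h]; exact hJM ℓ
      · intro ℓ
        show (if ℓ = ℓ₀ then jprev (J ℓ₀) s else 0) ∈ J ℓ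
        by_cases h : ℓ = ℓ₀
        · rw [if_pos h, h]; exact hprJ ℓ₀ s hs0
        · rw [if_neg h]; exact hJ0 ℓ
      · intro ℓ kk hkk
        have := Finset.mem_erase.1 (hSsub ℓ hkk)
        exact hprJ ℓ kk (by omega)
      · intro ℓ i
        by_cases h : ℓ = ℓ₀
        · subst h
          simp only [hSf, hudef, hvdef, if_pos rfl, Finset.sum_singleton]
        · simp only [hSf, hudef, hvdef, if_neg h]
          exact telescope (J ℓ) M (hJ0 ℓ) (hJM ℓ) (hJle ℓ) (fun t => if i = t then (1:ℝ) else 0)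
    have heval : ∑ ε : Fin L → Bool, boxSign ε * Dstar (fun ℓ => if ε ℓ then u ℓ else v ℓ)
        = (s : ℝ)/M - (jprev (J ℓ₀) s : ℝ)/M := by
      set εT : Fin L → Bool := fun _ => true with hεT
      set εF : Fin L → Bool := fun ℓ => decide (ℓ ≠ ℓ₀) with hεF
      have hne : εT ≠ εF := by
        intro h
        have := congrFun h ℓ₀
        simp [hεT, hεF] at this
      have hvanish : ∀ ε : Fin L → Bool, ε ∈ Finset.univ →
          ε ∉ ({εT, εF} : Finset (Fin L → Bool)) →
          boxSign ε * Dstar (fun ℓ => if ε ℓ then u ℓ else v ℓ) = 0 := by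
        intro ε _ hε
        obtain ⟨ℓ, hℓ1, hℓ2⟩ : ∃ ℓ, ℓ ≠ ℓ₀ ∧ ε ℓ = false := by
          by_contra hcon
          push_neg at hcon
          apply hε
          simp only [Finset.mem_insert, Finset.mem_singleton]
          by_cases h : ε ℓ₀
          · left
            funext ℓ
            by_cases hh : ℓ = ℓ₀
            · subst hh; simp [hεT, h]
            · simp only [hεT]
              cases hεℓ : ε ℓ
              · exact absurd hεℓ (hcon ℓ hh)
              · rfl
          · right
            funext ℓ
            by_cases hh : ℓ = ℓ₀
            · subst hh
              simp only [hεF]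
              cases hεℓ : ε ℓ
              · simp
              · exact absurd hεℓ h
            · simp only [hεF]
              cases hεℓ : ε ℓ
              · exact absurd hεℓ (hcon ℓ hh)
              · simp [hh]
        have hzero : Dstar (fun ℓ' => if ε ℓ' then u ℓ' else v ℓ') = 0 := by
          apply hS1
          · intro ℓ'
            by_cases h : ε ℓ'
            · rw [if_pos h]
              show (if ℓ' = ℓ₀ then s else M) ∈ J ℓ'
              by_cases hh : ℓ' = ℓ₀
              · rw [if_pos hh, hh]; exact hsJ
              · rw [if_neg hh]; exact hJM ℓ'
            · rw [if_neg h]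
              show (if ℓ' = ℓ₀ then jprev (J ℓ₀) s else 0) ∈ J ℓ'
              by_cases hh : ℓ' = ℓ₀
              · rw [if_pos hh, hh]; exact hprJ ℓ₀ s hs0
              · rw [if_neg hh]; exact hJ0 ℓ'
          · refine ⟨ℓ, ?_⟩
            simp [hℓ2, hvdef, hℓ1]
        rw [hzero, mul_zero]
      rw [← Finset.sum_subset (Finset.subset_univ ({εT, εF} : Finset (Fin L → Bool))) hvanish]
      rw [Finset.sum_pair hne]
      have h1 : (fun ℓ => if εT ℓ then u ℓ else v ℓ) = (fun l => if l = ℓ₀ then s else M) := by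
        funext ℓ
        simp [hεT, hudef]
      have h2 : boxSign εT = 1 := by
        simp only [hεT]
        exact boxSign_true
      have h3 : (fun ℓ => if εF ℓ then u ℓ else v ℓ)
          = (fun l => if l = ℓ₀ then jprev (J ℓ₀) s else M) := by
        funext ℓ
        by_cases h : ℓ = ℓ₀
        · subst h; simp [hεF, hvdef]
        · simp [hεF, h, hudef]
      have h4 : boxSign εF = -1 := by
        rw [boxSign]
        have : (Finset.univ.filter fun ℓ => εF ℓ = false) = {ℓ₀} := by
          ext ℓ
          simp [hεF]
        rw [this]
        simp
      rw [h1, h2, h3, h4, hS2 ℓ₀ s hsJ, hS2 ℓ₀ _ (hprJ ℓ₀ s hs0)]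
      ring
    rw [hfilter, Finset.sum_congr rfl (fun b hb => hc b (hsubBx hb)), ← Finset.mul_sum, hmu, heval]
    field_simp
  have hslabN : ∀ (ℓ₀ : Fin L), ∀ s ∈ (J ℓ₀).erase 0,
      ∑ b ∈ (SCExt.Bx J).filter (fun b => b ℓ₀ = s), SCExt.cc M J Dstar b
        = s - jprev (J ℓ₀) s := by
    intro ℓ₀ s hs
    have hs' := Finset.mem_erase.1 hs
    have hs0 : 0 < s := by omega
    have hple : jprev (J ℓ₀) s ≤ s := le_of_lt (hprlt ℓ₀ s hs0)
    have h2 : ((∑ b ∈ (SCExt.Bx J).filter (fun b => b ℓ₀ = s), SCExt.cc M J Dstar b : ℕ) : ℝ)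
        = ((s - jprev (J ℓ₀) s : ℕ) : ℝ) := by
      rw [Nat.cast_sum, Nat.cast_sub hple]
      exact hslabR ℓ₀ s hs
    exact Nat.cast_injective h2
  -- cumulative sums (identity A)
  have hcumR : ∀ j : Fin L → ℕ, (∀ ℓ, j ℓ ∈ J ℓ) →
      ∑ b ∈ (SCExt.Bx J).filter (fun b => ∀ ℓ, b ℓ ≤ j ℓ), (SCExt.cc M J Dstar b : ℝ)
        = (M : ℝ) * Dstar j := by
    intro j hj
    set Sf : Fin L → Finset ℕ := fun ℓ => (J ℓ).filter (fun k => k ≠ 0 ∧ k ≤ j ℓ) with hSf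
    have hSsub : ∀ ℓ, Sf ℓ ⊆ (J ℓ).erase 0 := by
      intro ℓ x hx
      have := Finset.mem_filter.1 hx
      exact Finset.mem_erase.2 ⟨this.2.1, this.1⟩
    have hfilter : (SCExt.Bx J).filter (fun b => ∀ ℓ, b ℓ ≤ j ℓ) = Fintype.piFinset Sf := by
      ext b
      simp only [Finset.mem_filter, SCExt.Bx, Fintype.mem_piFinset, hSf, Finset.mem_erase]
      constructor
      · rintro ⟨h1, h2⟩ ℓ
        exact ⟨(h1 ℓ).2, (h1 ℓ).1, h2 ℓ⟩
      · intro h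
        exact ⟨fun ℓ => ⟨(h ℓ).2.1, (h ℓ).1⟩, fun ℓ => (h ℓ).2.2⟩
    have hsubBx : Fintype.piFinset Sf ⊆ SCExt.Bx J := by
      rw [← hfilter]
      exact Finset.filter_subset _ _
    have hmu : ∑ b ∈ Fintype.piFinset Sf, SCExt.mu J Dstar b
        = ∑ ε : Fin L → Bool, boxSign ε * Dstar (fun ℓ => if ε ℓ then j ℓ else (fun _ => 0) ℓ) := by
      apply sumbox J Dstar Sf hSsub j (fun _ => 0) hj (fun ℓ => hJ0 ℓ)
      · intro ℓ kk hkk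
        have := Finset.mem_erase.1 (hSsub ℓ hkk)
        exact hprJ ℓ kk (by omega)
      · intro ℓ i
        by_cases hj0 : j ℓ = 0
        · have hempty : Sf ℓ = ∅ := by
            ext kk
            simp only [hSf, Finset.mem_filter, Finset.notMem_empty, iff_false, not_and]
            intro _ h1 h2
            omega
          rw [hempty, Finset.sum_empty, hj0]
          simp
        · set J' : Finset ℕ := (J ℓ).filter (fun t => t ≤ j ℓ) with hJ'
          have hT : j ℓ ∈ J' := Finset.mem_filter.2 ⟨hj ℓ, le_refl _⟩
          have h0' : (0:ℕ) ∈ J' := Finset.mem_filter.2 ⟨hJ0 ℓ, Nat.zero_le _⟩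
          have hle' : ∀ k ∈ J', k ≤ j ℓ := fun k hk => (Finset.mem_filter.1 hk).2
          have hSe : Sf ℓ = J'.erase 0 := by
            ext kk
            simp only [hSf, hJ', Finset.mem_filter, Finset.mem_erase]
            tauto
          have hpr' : ∀ k ∈ J'.erase 0, jprev J' k = jprev (J ℓ) k := by
            intro kk hkk
            obtain ⟨hk0, hkJ'⟩ := Finset.mem_erase.1 hkk
            have hkle := (Finset.mem_filter.1 hkJ').2
            have hfe : J'.filter (fun w => w < kk) = (J ℓ).filter (fun w => w < kk) := by
              ext t
              simp only [hJ', Finset.mem_filter]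
              constructor
              · rintro ⟨⟨ht, _⟩, h2⟩; exact ⟨ht, h2⟩
              · rintro ⟨ht, h2⟩; exact ⟨⟨ht, by omega⟩, h2⟩
            rw [jprev, jprev, hfe]
          rw [hSe, Finset.sum_congr rfl (fun k hk => by rw [← hpr' k hk])]
          exact telescope J' (j ℓ) h0' hT hle' (fun t => if i = t then (1:ℝ) else 0)
    have heval : ∑ ε : Fin L → Bool, boxSign ε * Dstar (fun ℓ => if ε ℓ then j ℓ else (fun _ => 0) ℓ)
        = Dstar j := by
      rw [Finset.sum_eq_single (fun _ : Fin L => true)]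
      · rw [boxSign_true, one_mul]
        congr 1
      · intro ε _ hne
        obtain ⟨ℓ, hℓ⟩ : ∃ ℓ, ε ℓ = false := by
          by_contra hcon
          push_neg at hcon
          apply hne
          funext ℓ
          cases h : ε ℓ
          · exact absurd h (hcon ℓ)
          · rfl
        have hzero : Dstar (fun ℓ' => if ε ℓ' then j ℓ' else (fun _ => 0) ℓ') = 0 := by
          apply hS1
          · intro ℓ'
            by_cases h : ε ℓ'
            · simpa [h] using hj ℓ'
            · simpa [h] using hJ0 ℓ'
          · exact ⟨ℓ, by simp [hℓ]⟩
        rw [hzero, mul_zero]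
      · intro h
        exact absurd (Finset.mem_univ _) h
    rw [hfilter, Finset.sum_congr rfl (fun b hb => hc b (hsubBx hb)), ← Finset.mul_sum, hmu, heval]
  -- enc injectivity on Bx
  have hencinj : ∀ b ∈ SCExt.Bx J, ∀ b' ∈ SCExt.Bx J,
      SCExt.enc M b = SCExt.enc M b' → b = b' := by
    intro b hb b' hb' h
    have hle : ∀ ℓ, b ℓ ≤ M := fun ℓ => hJle ℓ _ (hBxmem b hb ℓ).1
    have hle' : ∀ ℓ, b' ℓ ≤ M := fun ℓ => hJle ℓ _ (hBxmem b' hb' ℓ).1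
    rw [SCExt.enc, SCExt.enc] at h
    have h1 := (Fintype.equivFin (Fin L → Fin (M+1))).injective (Fin.val_injective h)
    funext ℓ
    have h2 := congrFun h1 ℓ
    have h3 := congrArg Fin.val h2
    simpa [min_eq_left (hle ℓ), min_eq_left (hle' ℓ)] using h3
  -- offset bounds
  have hoonm : ∀ (ℓ : Fin L), ∀ b : Fin L → ℕ,
      b ∉ (SCExt.Bx J).filter
        (fun b' => b' ℓ = b ℓ ∧ SCExt.enc M b' < SCExt.enc M b) := by
    intro ℓ b hmem
    exact lt_irrefl _ (Finset.mem_filter.1 hmem).2.2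
  have hoo : ∀ (ℓ : Fin L), ∀ b ∈ SCExt.Bx J,
      SCExt.oo M J Dstar ℓ b + SCExt.cc M J Dstar b
        ≤ ∑ b' ∈ (SCExt.Bx J).filter (fun b' => b' ℓ = b ℓ), SCExt.cc M J Dstar b' := by
    intro ℓ b hb
    rw [SCExt.oo, add_comm, ← Finset.sum_insert (hoonm ℓ b)]
    apply Finset.sum_le_sum_of_subset
    intro x hx
    rcases Finset.mem_insert.1 hx with h | h
    · subst h
      exact Finset.mem_filter.2 ⟨hb, rfl⟩
    · have := Finset.mem_filter.1 h
      exact Finset.mem_filter.2 ⟨this.1, this.2.1⟩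
  have hoolt : ∀ (ℓ : Fin L), ∀ b ∈ SCExt.Bx J, ∀ b' ∈ SCExt.Bx J, b ℓ = b' ℓ →
      SCExt.enc M b < SCExt.enc M b' →
      SCExt.oo M J Dstar ℓ b + SCExt.cc M J Dstar b ≤ SCExt.oo M J Dstar ℓ b' := by
    intro ℓ b hb b' hb' hslab henc
    rw [SCExt.oo, SCExt.oo, add_comm, ← Finset.sum_insert (hoonm ℓ b)]
    apply Finset.sum_le_sum_of_subset
    intro x hx
    rcases Finset.mem_insert.1 hx with h | h
    · subst h
      exact Finset.mem_filter.2 ⟨hb, hslab, henc⟩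
    · have := Finset.mem_filter.1 h
      exact Finset.mem_filter.2 ⟨this.1, hslab ▸ this.2.1, lt_trans this.2.2 henc⟩
  -- membership in PP
  have hPP : ∀ p : (_ : Fin L → ℕ) × ℕ, p ∈ SCExt.PP M J Dstar ↔
      p.1 ∈ SCExt.Bx J ∧ p.2 < SCExt.cc M J Dstar p.1 := by
    intro p
    constructor
    · intro h
      have := Finset.mem_sigma.1 h
      exact ⟨this.1, Finset.mem_range.1 this.2⟩
    · intro h
      exact Finset.mem_sigma.2 ⟨h.1, Finset.mem_range.2 h.2⟩
  -- coordinate bounds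
  have hxb : ∀ p ∈ SCExt.PP M J Dstar, ∀ ℓ,
      jprev (J ℓ) (p.1 ℓ) < SCExt.xx M J Dstar ℓ p ∧ SCExt.xx M J Dstar ℓ p ≤ p.1 ℓ := by
    intro p hp ℓ
    obtain ⟨hp1, hp2⟩ := (hPP p).1 hp
    have hb := hBxmem p.1 hp1 ℓ
    constructor
    · simp only [SCExt.xx]
      omega
    · have h2 := hoo ℓ p.1 hp1
      have h3 : ∑ b' ∈ (SCExt.Bx J).filter (fun b' => b' ℓ = p.1 ℓ), SCExt.cc M J Dstar b'
          = p.1 ℓ - jprev (J ℓ) (p.1 ℓ) :=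
        hslabN ℓ (p.1 ℓ) (Finset.mem_erase.2 ⟨Nat.pos_iff_ne_zero.1 hb.2, hb.1⟩)
      rw [h3] at h2
      clear h3
      have h4 := hprlt ℓ (p.1 ℓ) hb.2
      simp only [SCExt.xx]
      omega
  -- slab cardinality
  have hslabcard : ∀ (ℓ : Fin L), ∀ s ∈ (J ℓ).erase 0,
      ((SCExt.PP M J Dstar).filter (fun p => p.1 ℓ = s)).card = s - jprev (J ℓ) s := by
    intro ℓ s hs
    have heq : (SCExt.PP M J Dstar).filter (fun p => p.1 ℓ = s)
        = ((SCExt.Bx J).filter (fun b => b ℓ = s)).sigma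
            (fun b => Finset.range (SCExt.cc M J Dstar b)) := by
      ext p
      simp only [SCExt.PP, Finset.mem_filter, Finset.mem_sigma]
      tauto
    rw [heq, Finset.card_sigma]
    simp only [Finset.card_range]
    exact hslabN ℓ s hs
  -- injectivity of xx on slabs
  have hxinj : ∀ (ℓ : Fin L) (s : ℕ),
      Set.InjOn (SCExt.xx M J Dstar ℓ) ((SCExt.PP M J Dstar).filter (fun p => p.1 ℓ = s)) := by
    intro ℓ s p hp q hq hxy
    obtain ⟨hpP, hps⟩ := Finset.mem_filter.1 (Finset.mem_coe.1 hp)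
    obtain ⟨hqP, hqs⟩ := Finset.mem_filter.1 (Finset.mem_coe.1 hq)
    obtain ⟨hp1, hp2⟩ := (hPP p).1 hpP
    obtain ⟨hq1, hq2⟩ := (hPP q).1 hqP
    have hj : jprev (J ℓ) (p.1 ℓ) = jprev (J ℓ) (q.1 ℓ) := by rw [hps, hqs]
    by_cases hbb : p.1 = q.1
    · have hsnd : p.2 = q.2 := by
        rw [SCExt.xx, SCExt.xx, hbb] at hxy
        omega
      obtain ⟨pb, pr⟩ := p
      obtain ⟨qb, qr⟩ := q
      simp only at hbb hsnd
      subst hbb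
      subst hsnd
      rfl
    · have henc : SCExt.enc M p.1 ≠ SCExt.enc M q.1 :=
        fun h => hbb (hencinj _ hp1 _ hq1 h)
      simp only [SCExt.xx] at hxy
      rcases lt_or_gt_of_ne henc with h | h
      · have hord := hoolt ℓ p.1 hp1 q.1 hq1 (hps.trans hqs.symm) h
        omega
      · have hord := hoolt ℓ q.1 hq1 p.1 hp1 (hqs.trans hps.symm) h
        omega
  -- image of slab under xx
  have hximg : ∀ (ℓ : Fin L), ∀ s ∈ (J ℓ).erase 0,
      ((SCExt.PP M J Dstar).filter (fun p => p.1 ℓ = s)).image (SCExt.xx M J Dstar ℓ)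
        = Finset.Ioc (jprev (J ℓ) s) s := by
    intro ℓ s hs
    apply Finset.eq_of_subset_of_card_le
    · intro y hy
      obtain ⟨p, hp, rfl⟩ := Finset.mem_image.1 hy
      obtain ⟨hpP, hps⟩ := Finset.mem_filter.1 hp
      have hb := hxb p hpP ℓ
      rw [hps] at hb
      exact Finset.mem_Ioc.2 hb
    · rw [Nat.card_Ioc, Finset.card_image_of_injOn (hxinj ℓ s), hslabcard ℓ s hs]
  -- counting lemma for margins
  have hcount : ∀ (ℓ : Fin L), ∀ k ≤ M,
      ((SCExt.PP M J Dstar).filter (fun p => SCExt.xx M J Dstar ℓ p ≤ k)).card = k := by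
    intro ℓ k hk
    have hmap : ∀ p ∈ (SCExt.PP M J Dstar).filter (fun p => SCExt.xx M J Dstar ℓ p ≤ k),
        p.1 ℓ ∈ (J ℓ).erase 0 := by
      intro p hp
      have hpP := (Finset.mem_filter.1 hp).1
      have hb := hBxmem p.1 ((hPP p).1 hpP).1 ℓ
      exact Finset.mem_erase.2 ⟨Nat.pos_iff_ne_zero.1 hb.2, hb.1⟩
    rw [Finset.card_eq_sum_card_fiberwise hmap]
    have hfib : ∀ s ∈ (J ℓ).erase 0,
        (((SCExt.PP M J Dstar).filter (fun p => SCExt.xx M J Dstar ℓ p ≤ k)).filter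
            (fun p => p.1 ℓ = s)).card = min s k - min (jprev (J ℓ) s) k := by
      intro s hs
      have hcomm : ((SCExt.PP M J Dstar).filter
            (fun p => SCExt.xx M J Dstar ℓ p ≤ k)).filter (fun p => p.1 ℓ = s)
          = ((SCExt.PP M J Dstar).filter (fun p => p.1 ℓ = s)).filter
              (fun p => SCExt.xx M J Dstar ℓ p ≤ k) := by
        ext p
        simp only [Finset.mem_filter]
        tauto
      have hinj2 : Set.InjOn (SCExt.xx M J Dstar ℓ)
          (((SCExt.PP M J Dstar).filter (fun p => p.1 ℓ = s)).filter
            (fun p => SCExt.xx M J Dstar ℓ p ≤ k)) := by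
        apply (hxinj ℓ s).mono
        intro p hp
        exact Finset.mem_coe.2 (Finset.mem_of_mem_filter p (Finset.mem_coe.1 hp))
      rw [hcomm, ← Finset.card_image_of_injOn hinj2]
      have himg2 : ((((SCExt.PP M J Dstar).filter (fun p => p.1 ℓ = s)).filter
            (fun p => SCExt.xx M J Dstar ℓ p ≤ k)).image (SCExt.xx M J Dstar ℓ))
          = (Finset.Ioc (jprev (J ℓ) s) s).filter (fun y => y ≤ k) := by
        rw [← hximg ℓ s hs]
        ext y
        simp only [Finset.mem_image, Finset.mem_filter]
        constructor
        · rintro ⟨p, hp, rfl⟩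
          exact ⟨⟨p, hp.1, rfl⟩, hp.2⟩
        · rintro ⟨⟨p, hp, rfl⟩, hy⟩
          exact ⟨p, ⟨hp, hy⟩, rfl⟩
      rw [himg2]
      have hioc : (Finset.Ioc (jprev (J ℓ) s) s).filter (fun y => y ≤ k)
          = Finset.Ioc (min (jprev (J ℓ) s) k) (min s k) := by
        ext t
        simp only [Finset.mem_filter, Finset.mem_Ioc]
        omega
      rw [hioc, Nat.card_Ioc]
    rw [Finset.sum_congr rfl hfib]
    have hterm : ∀ s ∈ (J ℓ).erase 0,
        ((min s k - min (jprev (J ℓ) s) k : ℕ) : ℝ)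
          = (fun t : ℕ => ((min t k : ℕ) : ℝ)) s
            - (fun t : ℕ => ((min t k : ℕ) : ℝ)) (jprev (J ℓ) s) := by
      intro s hs
      have hs' := Finset.mem_erase.1 hs
      have hlt := hprlt ℓ s (by omega)
      simp only
      rw [Nat.cast_sub (by omega : min (jprev (J ℓ) s) k ≤ min s k)]
    have hR : ((∑ s ∈ (J ℓ).erase 0, (min s k - min (jprev (J ℓ) s) k) : ℕ) : ℝ) = (k : ℝ) := by
      rw [Nat.cast_sum, Finset.sum_congr rfl hterm,
        telescope (J ℓ) M (hJ0 ℓ) (hJM ℓ) (hJle ℓ) (fun t : ℕ => ((min t k : ℕ) : ℝ))]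
      rw [min_eq_right hk, Nat.zero_min]
      simp
    exact Nat.cast_injective hR
  have hL0 : (0 : ℕ) < L := by omega
  have hPcard : (SCExt.PP M J Dstar).card = M := by
    have hfil := Finset.filter_true_of_mem (s := SCExt.PP M J Dstar)
      (p := fun p => SCExt.xx M J Dstar (⟨0, hL0⟩ : Fin L) p ≤ M)
      (fun p hp => le_trans (hxb p hp ⟨0, hL0⟩).2
        (hJle ⟨0, hL0⟩ _ (hBxmem p.1 ((hPP p).1 hp).1 ⟨0, hL0⟩).1))
    rw [← hfil]
    exact hcount ⟨0, hL0⟩ M (le_refl M)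
  have hmargin : ∀ (ℓ : Fin L) (k : ℕ), k ≤ M →
      SCExt.DD M J Dstar (fun l => if l = ℓ then k else M) = (k : ℝ) / M := by
    intro ℓ k hk
    rw [SCExt.DD]
    have hfil : (SCExt.PP M J Dstar).filter
          (fun p => ∀ l, SCExt.xx M J Dstar l p ≤ (fun l => if l = ℓ then k else M) l)
        = (SCExt.PP M J Dstar).filter (fun p => SCExt.xx M J Dstar ℓ p ≤ k) := by
      apply Finset.filter_congr
      intro p hp
      constructor
      · intro h
        simpa using h ℓ
      · intro h l
        by_cases hl : l = ℓ
        · subst hl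
          simpa using h
        · simp only [if_neg hl]
          exact le_trans (hxb p hp l).2 (hJle l _ (hBxmem p.1 ((hPP p).1 hp).1 l).1)
    rw [hfil, hcount ℓ k hk]
  -- the candidate copula
  refine ⟨SCExt.DD M J Dstar, ⟨⟨?_, ?_, ?_, ?_⟩, ?_, ?_⟩, ?_⟩
  · -- values in [0,1]
    intro i hi
    rw [Set.mem_Icc]
    constructor
    · rw [SCExt.DD]
      exact div_nonneg (Nat.cast_nonneg _) (Nat.cast_nonneg _)
    · rw [SCExt.DD, div_le_one (by exact_mod_cast hM : (0:ℝ) < M)]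
      have hle := Finset.card_le_card
        (Finset.filter_subset (fun p => ∀ ℓ, SCExt.xx M J Dstar ℓ p ≤ i ℓ) (SCExt.PP M J Dstar))
      exact_mod_cast le_trans hle (le_of_eq hPcard)
  · -- groundedness
    intro i hi hex
    obtain ⟨ℓ, h0⟩ := hex
    rw [SCExt.DD]
    have hempty : (SCExt.PP M J Dstar).filter (fun p => ∀ l, SCExt.xx M J Dstar l p ≤ i l) = ∅ := by
      apply Finset.eq_empty_of_forall_notMem
      intro p hp
      have hmem := Finset.mem_filter.1 hp
      have h1 := hmem.2 ℓ
      have h2 := (hxb p hmem.1 ℓ).1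
      omega
    rw [hempty]
    simp
  · -- margins
    intro ℓ k hk
    exact hmargin ℓ k hk
  · -- L-increasing
    intro i hi
    have hrw : ∀ g : Fin L → ℕ, SCExt.DD M J Dstar g
        = (∑ p ∈ SCExt.PP M J Dstar,
            if ∀ ℓ, SCExt.xx M J Dstar ℓ p ≤ g ℓ then (1:ℝ) else 0) / M := by
      intro g
      rw [SCExt.DD, Finset.card_filter]
      congr 1
      rw [Nat.cast_sum]
      apply Finset.sum_congr rfl
      intro p _
      split_ifs <;> simp
    have key : ∑ ε : Fin L → Bool,
          boxSign ε * SCExt.DD M J Dstar (fun ℓ => if ε ℓ then i ℓ else i ℓ - 1)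
        = (∑ p ∈ SCExt.PP M J Dstar,
            ∏ ℓ, ((if SCExt.xx M J Dstar ℓ p ≤ i ℓ then (1:ℝ) else 0)
              - (if SCExt.xx M J Dstar ℓ p ≤ i ℓ - 1 then 1 else 0))) / M := by
      rw [Finset.sum_congr rfl (fun ε _ => by rw [hrw, ← mul_div_assoc])]
      rw [← Finset.sum_div]
      congr 1
      rw [Finset.sum_congr rfl (fun ε _ => Finset.mul_sum _ _ _), Finset.sum_comm]
      apply Finset.sum_congr rfl
      intro p _
      rw [prod_sub_expand]
      apply Finset.sum_congr rfl
      intro ε _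
      congr 1
      rw [ind_forall]
      apply Finset.prod_congr rfl
      intro ℓ _
      by_cases h : ε ℓ
      · rw [if_pos h, if_pos h]
      · rw [if_neg h, if_neg h]
    rw [key]
    apply div_nonneg _ (Nat.cast_nonneg _)
    apply Finset.sum_nonneg
    intro p _
    apply Finset.prod_nonneg
    intro ℓ _
    by_cases h1 : SCExt.xx M J Dstar ℓ p ≤ i ℓ - 1
    · have h2 : SCExt.xx M J Dstar ℓ p ≤ i ℓ := by omega
      rw [if_pos h1, if_pos h2]
      norm_num
    · rw [if_neg h1]
      by_cases h2 : SCExt.xx M J Dstar ℓ p ≤ i ℓ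
      · rw [if_pos h2]; norm_num
      · rw [if_neg h2]; norm_num
  · -- range in I_M
    intro i hi
    refine ⟨((SCExt.PP M J Dstar).filter (fun p => ∀ ℓ, SCExt.xx M J Dstar ℓ p ≤ i ℓ)).card,
      ?_, rfl⟩
    exact le_trans (Finset.card_le_card (Finset.filter_subset _ _)) (le_of_eq hPcard)
  · -- onto I_M
    intro k hk
    refine ⟨(fun l => if l = (⟨0, hL0⟩ : Fin L) then k else M), fun ℓ => ?_, hmargin ⟨0, hL0⟩ k hk⟩
    show (if ℓ = (⟨0, hL0⟩ : Fin L) then k else M) ≤ M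
    by_cases h : ℓ = (⟨0, hL0⟩ : Fin L)
    · rw [if_pos h]; exact hk
    · rw [if_neg h]
  · -- restriction to the grid
    intro i hi
    have hfil : (SCExt.PP M J Dstar).filter (fun p => ∀ ℓ, SCExt.xx M J Dstar ℓ p ≤ i ℓ)
        = ((SCExt.Bx J).filter (fun b => ∀ ℓ, b ℓ ≤ i ℓ)).sigma
            (fun b => Finset.range (SCExt.cc M J Dstar b)) := by
      ext p
      simp only [Finset.mem_filter, Finset.mem_sigma, Finset.mem_range]
      constructor
      · rintro ⟨hpP, hx⟩
        obtain ⟨hb, hr⟩ := (hPP p).1 hpP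
        refine ⟨⟨hb, fun ℓ => ?_⟩, hr⟩
        by_contra hcon
        push_neg at hcon
        have h1 : i ℓ ≤ jprev (J ℓ) (p.1 ℓ) := le_jprev (J ℓ) _ _ (hi ℓ) hcon
        have h2 := (hxb p hpP ℓ).1
        have h3 := hx ℓ
        omega
      · rintro ⟨⟨hb, hble⟩, hr⟩
        have hpP : p ∈ SCExt.PP M J Dstar := (hPP p).2 ⟨hb, hr⟩
        exact ⟨hpP, fun ℓ => le_trans (hxb p hpP ℓ).2 (hble ℓ)⟩
    rw [SCExt.DD, hfil, Finset.card_sigma]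
    simp only [Finset.card_range]
    rw [Nat.cast_sum, hcumR i hi, mul_comm, mul_div_assoc, div_self hM0, mul_one]
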